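/- Let y : ℕ → ℂ satisfy the Jacobi equation a_{n-1} y_{n-1} + a_n y_{n+1} + b_n y_n = z y_n for n ≥ 1, and define u_n ∈ ℂ² by (y_n, y_{n+1})ᵗ = T_n u_n, where T_n = [[c_n, s_n],[c_{n+1}, s_{n+1}]] is invertible. Then J(u_{n+1} − u_n) = z H_{n+1} u_n where H_{n+1} = [[c_{n+1}², c_{n+1} s_{n+1}],[c_{n+1} s_{n+1}, s_{n+1}²]] and J = [[0,-1],[1,0]]. -/
import Mathlib


open Matrix

noncomputable section

def JmatC : Matrix (Fin 2) (Fin 2) ℂ := !![0, -1; 1, 0]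

lemma wronskian_aux (a b : ℕ → ℝ) (c s : ℕ → ℝ)
    (ha0 : a 0 = -1)
    (hc : ∀ n, a n * c n + a (n + 1) * c (n + 2) + b (n + 1) * c (n + 1) = 0)
    (hs : ∀ n, a n * s n + a (n + 1) * s (n + 2) + b (n + 1) * s (n + 1) = 0)
    (hc0 : c 0 = 1) (hc1 : c 1 = 0) (hs0 : s 0 = 0) (hs1 : s 1 = 1) :
    ∀ n, a n * (c n * s (n + 1) - c (n + 1) * s n) = -1 := by
  intro n
  induction n with
  | zero => simp [ha0, hc0, hc1, hs0, hs1]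
  | succ n ih => linear_combination ih + c (n + 1) * hs n - s (n + 1) * hc n

theorem jacobi_to_discrete_canonical_system (a b : ℕ → ℝ) (c s : ℕ → ℝ) (z : ℂ)
    (ha : ∀ n, a n ≠ 0) (ha0 : a 0 = -1)
    (hc : ∀ n, a n * c n + a (n + 1) * c (n + 2) + b (n + 1) * c (n + 1) = 0)
    (hs : ∀ n, a n * s n + a (n + 1) * s (n + 2) + b (n + 1) * s (n + 1) = 0)
    (hc0 : c 0 = 1) (hc1 : c 1 = 0) (hs0 : s 0 = 0) (hs1 : s 1 = 1)
    (y : ℕ → ℂ)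
    (hy : ∀ n, (a n : ℂ) * y n + (a (n + 1) : ℂ) * y (n + 2) + (b (n + 1) : ℂ) * y (n + 1)
        = z * y (n + 1))
    (u : ℕ → Fin 2 → ℂ)
    -- (y n, y (n+1))ᵗ = T n · u n  with  T n = !![c n, s n; c (n+1), s (n+1)]
    (hu : ∀ n, (!![(c n : ℂ), (s n : ℂ); (c (n + 1) : ℂ), (s (n + 1) : ℂ)]) *ᵥ u n
        = ![y n, y (n + 1)]) :
    ∀ n, JmatC *ᵥ (u (n + 1) - u n)
        = z • ((!![((c (n + 1) : ℝ) ^ 2 : ℂ), ((c (n + 1) * s (n + 1) : ℝ) : ℂ);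
                  ((c (n + 1) * s (n + 1) : ℝ) : ℂ), ((s (n + 1) : ℝ) ^ 2 : ℂ)]) *ᵥ u n) := by
  intro n
  have W : ((a n : ℂ)) * ((c n : ℂ) * (s (n + 1) : ℂ) - (c (n + 1) : ℂ) * (s n : ℂ)) = -1 := by
    exact_mod_cast wronskian_aux a b c s ha0 hc hs hc0 hc1 hs0 hs1 n
  have HCc : (a n : ℂ) * (c n : ℂ) + (a (n + 1) : ℂ) * (c (n + 2) : ℂ)
      + (b (n + 1) : ℂ) * (c (n + 1) : ℂ) = 0 := by exact_mod_cast hc n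
  have HSc : (a n : ℂ) * (s n : ℂ) + (a (n + 1) : ℂ) * (s (n + 2) : ℂ)
      + (b (n + 1) : ℂ) * (s (n + 1) : ℂ) = 0 := by exact_mod_cast hs n
  have A : (c n : ℂ) * u n 0 + (s n : ℂ) * u n 1 = y n := by
    have := congrFun (hu n) 0
    simpa [mulVec, dotProduct, Fin.sum_univ_two] using this
  have B : (c (n + 1) : ℂ) * u n 0 + (s (n + 1) : ℂ) * u n 1 = y (n + 1) := by
    have := congrFun (hu n) 1
    simpa [mulVec, dotProduct, Fin.sum_univ_two] using this
  have C : (c (n + 1) : ℂ) * u (n + 1) 0 + (s (n + 1) : ℂ) * u (n + 1) 1 = y (n + 1) := by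
    have := congrFun (hu (n + 1)) 0
    simpa [mulVec, dotProduct, Fin.sum_univ_two] using this
  have D : (c (n + 2) : ℂ) * u (n + 1) 0 + (s (n + 2) : ℂ) * u (n + 1) 1 = y (n + 2) := by
    have := congrFun (hu (n + 1)) 1
    simpa [mulVec, dotProduct, Fin.sum_univ_two] using this
  -- key identities
  have Estar : (a n : ℂ) * ((c n : ℂ) * (u n 0 - u (n + 1) 0)
      + (s n : ℂ) * (u n 1 - u (n + 1) 1))
      = z * ((c (n + 1) : ℂ) * u (n + 1) 0 + (s (n + 1) : ℂ) * u (n + 1) 1) := by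
    linear_combination hy n + (a n : ℂ) * A + (a (n + 1) : ℂ) * D
      + ((b (n + 1) : ℂ) - z) * C - u (n + 1) 0 * HCc - u (n + 1) 1 * HSc
  have Eplus : (c (n + 1) : ℂ) * (u n 0 - u (n + 1) 0)
      + (s (n + 1) : ℂ) * (u n 1 - u (n + 1) 1) = 0 := by
    linear_combination B - C
  have key1 : u (n + 1) 0 - u n 0
      = z * (s (n + 1) : ℂ) * ((c (n + 1) : ℂ) * u n 0 + (s (n + 1) : ℂ) * u n 1) := by
    linear_combination (s (n + 1) : ℂ) * Estar - (a n : ℂ) * (s n : ℂ) * Eplus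
      + (u (n + 1) 0 - u n 0) * W - z * (s (n + 1) : ℂ) * (B - C)
  have key2 : u n 1 - u (n + 1) 1
      = z * (c (n + 1) : ℂ) * ((c (n + 1) : ℂ) * u n 0 + (s (n + 1) : ℂ) * u n 1) := by
    linear_combination (c (n + 1) : ℂ) * Estar - (a n : ℂ) * (c n : ℂ) * Eplus
      + (u n 1 - u (n + 1) 1) * W + z * (c (n + 1) : ℂ) * (C - B)
  funext i
  fin_cases i <;>
    simp [JmatC, mulVec, dotProduct, Fin.sum_univ_two] <;>
    push_cast <;> [linear_combination key2; linear_combination key1]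

end
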